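/- arXiv:1405.4383 — 2 statements merged into one kernel-verified Lean document; each statement's English description precedes it below -/
import Mathlib

section
/- Let f be analytic on the open unit disk D with ‖f‖_∞ := sup_{z∈D}|f(z)| < ∞. Then lim_{n→∞} E_n(f)^{1/n} = 0 if and only if there exists an entire function F : ℂ → ℂ with F(z) = f(z) for all z ∈ D. -/
open Filter MeasureTheory

noncomputable section

/-- Iterated natural logarithm: `iterLog 0 x = x`, `iterLog (q+1) x = log (iterLog q x)`. -/
def iterLog : ℕ → ℝ → ℝ
  | 0, x => x
  | q + 1, x => Real.log (iterLog q x)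

/-- Maximum modulus of `F` on the closed disk of radius `r`. -/
def maxMod (F : ℂ → ℂ) (r : ℝ) : ℝ :=
  sSup ((fun z => ‖F z‖) '' Metric.closedBall (0 : ℂ) r)

/-- Generalized order of index `q` of an entire function. -/
def genOrder (q : ℕ) (F : ℂ → ℂ) : EReal :=
  limsup (fun r : ℝ => ((iterLog q (maxMod F r) / Real.log r : ℝ) : EReal)) atTop

/-- Generalized type of index `q` of an entire function, relative to the order `ρ`. -/
def genType (q : ℕ) (F : ℂ → ℂ) (ρ : ℝ) : EReal :=
  limsup (fun r : ℝ => ((iterLog (q - 1) (maxMod F r) / r ^ ρ : ℝ) : EReal)) atTop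

/-- Sup norm on the open unit disk. -/
def supNorm (f : ℂ → ℂ) : ℝ :=
  sSup ((fun z => ‖f z‖) '' Metric.ball (0 : ℂ) 1)

/-- Best sup-norm approximation of `f` by polynomials of degree at most `n - 1`. -/
def En (f : ℂ → ℂ) (n : ℕ) : ℝ :=
  sInf { e : ℝ | ∃ P : Polynomial ℂ, P.degree < (n : WithBot ℕ) ∧
    e = supNorm (fun z => f z - P.eval z) }

section Helpers
open Metric

lemma supNorm_nonneg (g : ℂ → ℂ) : 0 ≤ supNorm g :=
  Real.sSup_nonneg (by rintro x ⟨z, _, rfl⟩; positivity)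

lemma En_set_nonempty (f : ℂ → ℂ) (n : ℕ) : { e : ℝ | ∃ P : Polynomial ℂ,
    P.degree < (n : WithBot ℕ) ∧ e = supNorm (fun z => f z - P.eval z) }.Nonempty :=
  ⟨supNorm (fun z => f z - (0 : Polynomial ℂ).eval z),
    ⟨0, WithBot.bot_lt_coe n, rfl⟩⟩

lemma En_set_bddBelow (f : ℂ → ℂ) (n : ℕ) : BddBelow { e : ℝ | ∃ P : Polynomial ℂ,
    P.degree < (n : WithBot ℕ) ∧ e = supNorm (fun z => f z - P.eval z) } :=
  ⟨0, by rintro e ⟨P, _, rfl⟩; exact supNorm_nonneg _⟩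

lemma En_nonneg (f : ℂ → ℂ) (n : ℕ) : 0 ≤ En f n :=
  Real.sInf_nonneg (by rintro e ⟨P, _, rfl⟩; exact supNorm_nonneg _)

lemma poly_iteratedDeriv (P : Polynomial ℂ) (n : ℕ) :
    iteratedDeriv n (fun z => P.eval z) = fun z => (Polynomial.derivative^[n] P).eval z := by
  induction n generalizing P with
  | zero => simp
  | succ n ih =>
    rw [iteratedDeriv_succ']
    have : deriv (fun z => P.eval z) = fun z => P.derivative.eval z := by
      funext z; exact Polynomial.deriv (p := P)
    rw [this, ih, ← Function.iterate_succ_apply]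

lemma poly_iteratedDeriv_zero (P : Polynomial ℂ) (n : ℕ) (h : P.degree < (n : WithBot ℕ)) :
    iteratedDeriv n (fun z => P.eval z) 0 = 0 := by
  rw [poly_iteratedDeriv]
  rcases eq_or_ne P 0 with rfl | hP
  · simp
  · rw [Polynomial.iterate_derivative_eq_zero ((Polynomial.natDegree_lt_iff_degree_lt hP).mpr h)]
    simp

lemma iteratedDerivWithin_isOpen {f : ℂ → ℂ} {s : Set ℂ} (hs : IsOpen s) {x : ℂ} (hx : x ∈ s)
    (n : ℕ) : iteratedDerivWithin n f s x = iteratedDeriv n f x := by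
  rw [iteratedDerivWithin_eq_iteratedFDerivWithin, iteratedFDerivWithin_of_isOpen n hs hx,
    iteratedDeriv_eq_iteratedFDeriv]

lemma iteratedDeriv_sub_poly {f : ℂ → ℂ} (hf : AnalyticOnNhd ℂ f (ball (0:ℂ) 1))
    (P : Polynomial ℂ) (n : ℕ) :
    iteratedDeriv n (fun z => f z - P.eval z) 0
      = iteratedDeriv n f 0 - iteratedDeriv n (fun z => P.eval z) 0 := by
  have hs : IsOpen (ball (0:ℂ) 1) := isOpen_ball
  have hus : UniqueDiffOn ℂ (ball (0:ℂ) 1) := hs.uniqueDiffOn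
  have h0 : (0:ℂ) ∈ ball (0:ℂ) 1 := by simp
  have hPa : AnalyticOnNhd ℂ (fun z => P.eval z) (ball (0:ℂ) 1) := fun z _ =>
    (P.differentiable.differentiableOn (s := Set.univ)).analyticAt (Filter.univ_mem)
  have := iteratedDerivWithin_sub h0 hus (n := n)
    ((hf.contDiffOn hus) 0 h0) ((hPa.contDiffOn hus) 0 h0)
  rw [iteratedDerivWithin_isOpen hs h0, iteratedDerivWithin_isOpen hs h0,
    iteratedDerivWithin_isOpen hs h0] at this
  convert this using 2
  rfl

lemma cauchy_bound {g : ℂ → ℂ} (hd : DifferentiableOn ℂ g (ball (0:ℂ) 1)) {C : ℝ}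
    (hgC : ∀ z ∈ ball (0:ℂ) 1, ‖g z‖ ≤ C) {r : ℝ} (hr0 : 0 < r) (hr1 : r < 1)
    (n : ℕ) : ‖iteratedDeriv n g 0‖ * r ^ n ≤ (n.factorial : ℝ) * C := by
  lift r to NNReal using hr0.le with R hR
  have hR0 : (0:ℝ) < (R:ℝ) := hr0
  have hR1 : (R:ℝ) < 1 := hr1
  have hR0' : 0 < R := by exact_mod_cast hR0
  have hsub : closedBall (0:ℂ) R ⊆ ball (0:ℂ) 1 := closedBall_subset_ball hR1
  have hps : HasFPowerSeriesOnBall g (cauchyPowerSeries g 0 R) 0 R :=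
    (hd.mono hsub).hasFPowerSeriesOnBall hR0'
  have key := hps.factorial_smul (1 : ℂ) n
  have h1 : iteratedDeriv n g 0 = iteratedFDeriv ℂ n g 0 (fun _ => 1) :=
    iteratedDeriv_eq_iteratedFDeriv
  have hC0 : 0 ≤ C := le_trans (norm_nonneg _) (hgC 0 (by simp))
  have hcoeff : ‖cauchyPowerSeries g 0 R n‖ ≤ C * ((R:ℝ)⁻¹) ^ n := by
    refine (norm_cauchyPowerSeries_le g 0 R n).trans ?_
    have habs : |(R:ℝ)| = (R:ℝ) := abs_of_pos hR0
    rw [habs]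
    have hint : (∫ θ : ℝ in (0:ℝ)..2 * Real.pi, ‖g (circleMap 0 R θ)‖) ≤ C * (2 * Real.pi) := by
      have hb : ∀ θ ∈ Set.uIoc (0:ℝ) (2 * Real.pi), ‖‖g (circleMap 0 R θ)‖‖ ≤ C := by
        intro θ _
        rw [norm_norm]
        refine hgC _ ?_
        rw [mem_ball_zero_iff, norm_circleMap_zero, habs]
        exact hR1
      have := intervalIntegral.norm_integral_le_of_norm_le_const hb
      calc (∫ θ : ℝ in (0:ℝ)..2 * Real.pi, ‖g (circleMap 0 R θ)‖)
          ≤ ‖∫ θ : ℝ in (0:ℝ)..2 * Real.pi, ‖g (circleMap 0 R θ)‖‖ := le_abs_self _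
        _ ≤ C * |2 * Real.pi - 0| := this
        _ = C * (2 * Real.pi) := by rw [sub_zero, abs_of_pos Real.two_pi_pos]
    gcongr
    calc (2 * Real.pi)⁻¹ * ∫ θ : ℝ in (0:ℝ)..2 * Real.pi, ‖g (circleMap 0 R θ)‖
        ≤ (2 * Real.pi)⁻¹ * (C * (2 * Real.pi)) := by gcongr
      _ = C := by field_simp
  have hnorm : ‖iteratedDeriv n g 0‖ ≤ (n.factorial : ℝ) * (C * ((R:ℝ)⁻¹) ^ n) := by
    rw [h1, ← key]
    have hns : ‖(n.factorial : ℕ) • (cauchyPowerSeries g 0 R n fun _ => (1:ℂ))‖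
        = (n.factorial : ℝ) * ‖cauchyPowerSeries g 0 R n fun _ => (1:ℂ)‖ := by
      rw [← Nat.cast_smul_eq_nsmul ℝ, norm_smul]
      simp
    rw [hns]
    gcongr
    refine le_trans ((cauchyPowerSeries g 0 R n).le_opNorm _) ?_
    simpa using hcoeff
  calc ‖iteratedDeriv n g 0‖ * (R:ℝ) ^ n
      ≤ ((n.factorial : ℝ) * (C * ((R:ℝ)⁻¹) ^ n)) * (R:ℝ) ^ n := by gcongr
    _ = (n.factorial : ℝ) * C := by rw [mul_assoc, mul_assoc, ← mul_pow, inv_mul_cancel₀ hR0.ne', one_pow, mul_one]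

lemma abs_le_supNorm {g : ℂ → ℂ} (hbdd : BddAbove ((fun z => ‖g z‖) '' ball (0:ℂ) 1))
    {z : ℂ} (hz : z ∈ ball (0:ℂ) 1) : ‖g z‖ ≤ supNorm g :=
  le_csSup hbdd ⟨z, hz, rfl⟩

lemma bdd_sub {f : ℂ → ℂ}
    (hb : BddAbove ((fun z => ‖f z‖) '' Metric.ball (0 : ℂ) 1)) (P : Polynomial ℂ) :
    BddAbove ((fun z => ‖f z - P.eval z‖) '' ball (0:ℂ) 1) := by
  obtain ⟨Mf, hMf⟩ := hb
  obtain ⟨Mp, hMp⟩ := (isCompact_closedBall (0:ℂ) 1).exists_bound_of_continuousOn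
    (P.continuous_aeval.continuousOn (s := closedBall (0:ℂ) 1))
  refine ⟨Mf + Mp, ?_⟩
  rintro x ⟨z, hz, rfl⟩
  calc ‖f z - P.eval z‖ ≤ ‖f z‖ + ‖P.eval z‖ := by
        simpa [sub_eq_add_neg] using norm_add_le (f z) (-P.eval z)
    _ ≤ Mf + Mp := add_le_add (hMf ⟨z, hz, rfl⟩) (by
        simpa using hMp z (ball_subset_closedBall hz))

lemma abs_coeff_le_En {f : ℂ → ℂ} (hf : AnalyticOnNhd ℂ f (Metric.ball (0 : ℂ) 1))
    (hb : BddAbove ((fun z => ‖f z‖) '' Metric.ball (0 : ℂ) 1)) (n : ℕ) :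
    (n.factorial : ℝ)⁻¹ * ‖iteratedDeriv n f 0‖ ≤ En f n := by
  set a : ℝ := ‖iteratedDeriv n f 0‖ with ha
  have key : ∀ r : ℝ, 0 < r → r < 1 → (n.factorial : ℝ)⁻¹ * a * r ^ n ≤ En f n := by
    intro r hr0 hr1
    refine le_csInf (En_set_nonempty f n) ?_
    rintro e ⟨P, hP, rfl⟩
    set g : ℂ → ℂ := fun z => f z - P.eval z with hg
    have hd : DifferentiableOn ℂ g (ball (0:ℂ) 1) :=
      (hf.differentiableOn).sub (P.differentiable.differentiableOn)
    have hgC : ∀ z ∈ ball (0:ℂ) 1, ‖g z‖ ≤ supNorm g :=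
      fun z hz => abs_le_supNorm (bdd_sub hb P) hz
    have hiter : ‖iteratedDeriv n g 0‖ = a := by
      rw [hg, iteratedDeriv_sub_poly hf P n, poly_iteratedDeriv_zero P n hP, sub_zero]
    have := cauchy_bound hd hgC hr0 hr1 n
    rw [hiter] at this
    have hfac : (0:ℝ) < (n.factorial : ℝ) := by positivity
    calc (n.factorial : ℝ)⁻¹ * a * r ^ n = (n.factorial : ℝ)⁻¹ * (a * r ^ n) := by ring
      _ ≤ (n.factorial : ℝ)⁻¹ * ((n.factorial : ℝ) * supNorm g) := by gcongr
      _ = supNorm g := by field_simp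
  -- take r → 1
  have htend : Tendsto (fun k : ℕ => (n.factorial : ℝ)⁻¹ * a * (1 - ((k:ℝ)+2)⁻¹) ^ n) atTop
      (nhds ((n.factorial : ℝ)⁻¹ * a)) := by
    have h1 : Tendsto (fun k : ℕ => 1 - ((k:ℝ)+2)⁻¹) atTop (nhds 1) := by
      have : Tendsto (fun k : ℕ => ((k:ℝ)+2)⁻¹) atTop (nhds 0) := by
        apply Tendsto.inv_tendsto_atTop
        exact tendsto_atTop_add_const_right atTop 2 tendsto_natCast_atTop_atTop
      simpa using (tendsto_const_nhds (x := (1:ℝ))).sub this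
    have := ((h1.pow n).const_mul ((n.factorial : ℝ)⁻¹ * a))
    simpa [mul_assoc] using this
  refine le_of_tendsto htend (Eventually.of_forall fun k => ?_)
  have hk0 : (0:ℝ) < 1 - ((k:ℝ)+2)⁻¹ := by
    have h2 : (1:ℝ) < (k:ℝ) + 2 := by have : (0:ℝ) ≤ (k:ℝ) := Nat.cast_nonneg k; linarith
    have := inv_lt_one_of_one_lt₀ h2
    linarith
  have hk1 : 1 - ((k:ℝ)+2)⁻¹ < 1 := by
    have : (0:ℝ) < ((k:ℝ)+2)⁻¹ := by positivity
    linarith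
  exact key _ hk0 hk1

lemma forward {f : ℂ → ℂ} (hf : AnalyticOnNhd ℂ f (Metric.ball (0 : ℂ) 1))
    (hb : BddAbove ((fun z => ‖f z‖) '' Metric.ball (0 : ℂ) 1))
    (h : Tendsto (fun n : ℕ => En f n ^ (1 / (n : ℝ))) atTop (nhds 0)) :
    ∃ F : ℂ → ℂ, Differentiable ℂ F ∧ ∀ z ∈ Metric.ball (0 : ℂ) 1, F z = f z := by
  set a : ℕ → ℂ := fun n => (n.factorial : ℂ)⁻¹ * iteratedDeriv n f 0 with ha
  have habs : ∀ n, ‖a n‖ ≤ En f n := by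
    intro n
    have : ‖a n‖ = (n.factorial : ℝ)⁻¹ * ‖iteratedDeriv n f 0‖ := by
      rw [ha]
      simp [norm_mul, norm_inv, Complex.norm_natCast]
    rw [this]
    exact abs_coeff_le_En hf hb n
  have decay : ∀ t : ℝ, 0 < t → ∀ᶠ n in atTop, ‖a n‖ ≤ t ^ n := by
    intro t ht
    set t' : ℝ := min t 1 with ht'def
    have ht'0 : 0 < t' := lt_min ht one_pos
    have ht't : t' ≤ t := min_le_left _ _
    have hev : ∀ᶠ n : ℕ in atTop, En f n ^ (1 / (n : ℝ)) < t' := by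
      have := h.eventually (eventually_lt_nhds ht'0)
      simpa using this
    filter_upwards [hev, eventually_ge_atTop 1] with n hn hn1
    have hEnn : En f n = (En f n ^ (1 / (n : ℝ))) ^ n := by
      rw [← Real.rpow_natCast (En f n ^ (1 / (n:ℝ))) n, ← Real.rpow_mul (En_nonneg f n),
        one_div, inv_mul_cancel₀ (by exact_mod_cast Nat.one_le_iff_ne_zero.mp hn1 : (n:ℝ) ≠ 0),
        Real.rpow_one]
    calc ‖a n‖ ≤ En f n := habs n
      _ = (En f n ^ (1 / (n : ℝ))) ^ n := hEnn
      _ ≤ t' ^ n := pow_le_pow_left₀ (Real.rpow_nonneg (En_nonneg f n) _) hn.le n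
      _ ≤ t ^ n := pow_le_pow_left₀ ht'0.le ht't n
  set p : FormalMultilinearSeries ℂ ℂ ℂ := FormalMultilinearSeries.ofScalars ℂ a with hp
  have hrad : p.radius = ⊤ := by
    apply FormalMultilinearSeries.radius_eq_top_of_forall_nnreal_isBigO
    intro r
    rw [Asymptotics.isBigO_iff]
    refine ⟨1, ?_⟩
    have hpos : (0:ℝ) < (2 * ((r:ℝ) + 1))⁻¹ := by positivity
    filter_upwards [decay _ hpos] with n hn
    have hnorm : ‖p n‖ = ‖a n‖ := by
      rw [hp]; exact FormalMultilinearSeries.ofScalars_norm ℂ a n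
    have h1 : ‖p n‖ * (r:ℝ) ^ n ≤ ((2 * ((r:ℝ) + 1))⁻¹ * r) ^ n := by
      rw [hnorm, mul_pow]
      gcongr
    have h2 : ((2 * ((r:ℝ) + 1))⁻¹ * r) ^ n ≤ 1 := by
      apply pow_le_one₀ (by positivity)
      rw [inv_mul_le_iff₀ (by positivity)]
      nlinarith [r.coe_nonneg]
    have h3 : (0:ℝ) ≤ ‖p n‖ * (r:ℝ) ^ n := by positivity
    simp only [norm_one, mul_one, Real.norm_eq_abs, abs_of_nonneg h3]
    exact h1.trans h2
  refine ⟨p.sum, ?_, ?_⟩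
  · have hFps : HasFPowerSeriesOnBall p.sum p 0 ⊤ := by
      have := p.hasFPowerSeriesOnBall (by rw [hrad]; exact ENNReal.zero_lt_top)
      rwa [hrad] at this
    intro z
    exact (hFps.analyticAt_of_mem (by simp [edist_lt_top])).differentiableAt
  · intro z hz
    have hFps : HasFPowerSeriesOnBall p.sum p 0 ⊤ := by
      have := p.hasFPowerSeriesOnBall (by rw [hrad]; exact ENNReal.zero_lt_top)
      rwa [hrad] at this
    have hsumF : HasSum (fun n => a n * z ^ n) (p.sum z) := by
      have := hFps.hasSum (y := z) (by simp [edist_lt_top])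
      rw [zero_add] at this
      convert this using 1
      · rfl
      funext n
      rw [hp, FormalMultilinearSeries.ofScalars_apply_eq, smul_eq_mul]
    have htay := Complex.taylorSeries_eq_on_ball' hz hf.differentiableOn
    rw [hsumF.tsum_eq.symm, ← htay]
    apply tsum_congr
    intro n
    rw [ha]
    ring_nf

lemma backward {f : ℂ → ℂ} (F : ℂ → ℂ) (hFd : Differentiable ℂ F)
    (hFf : ∀ z ∈ Metric.ball (0:ℂ) 1, F z = f z) :
    Tendsto (fun n : ℕ => En f n ^ (1 / (n : ℝ))) atTop (nhds 0) := by
  set b : ℕ → ℂ := fun n => (n.factorial : ℂ)⁻¹ * iteratedDeriv n F 0 with hb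
  have hsum : ∀ z : ℂ, HasSum (fun n => b n * z ^ n) (F z) := by
    intro z
    have := Complex.hasSum_taylorSeries_of_entire hFd 0 z
    convert this using 1
    · rfl
    funext n
    rw [hb]
    simp only [smul_eq_mul, sub_zero]
    ring
  have decayB : ∀ ε : ℝ, 0 < ε → ∀ᶠ n in atTop, ‖b n‖ ≤ ε ^ n := by
    intro ε hε
    have hz : ‖((ε⁻¹ : ℝ) : ℂ)‖ = ε⁻¹ := by
      rw [Complex.norm_real, Real.norm_eq_abs, abs_of_pos (by positivity)]
    have htend : Tendsto (fun n => ‖b n * ((ε⁻¹ : ℝ) : ℂ) ^ n‖) atTop (nhds 0) := by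
      simpa using ((hsum ((ε⁻¹ : ℝ) : ℂ)).summable.tendsto_atTop_zero).norm
    have hev := htend.eventually (eventually_le_nhds one_pos)
    filter_upwards [hev] with n hn
    rw [norm_mul, norm_pow, hz] at hn
    have h1 : ‖b n‖ * (ε⁻¹) ^ n ≤ 1 := hn
    calc ‖b n‖ = ‖b n‖ * (ε⁻¹) ^ n * ε ^ n := by
          rw [mul_assoc, ← mul_pow, inv_mul_cancel₀ hε.ne', one_pow, mul_one]
      _ ≤ 1 * ε ^ n := by gcongr
      _ = ε ^ n := one_mul _
  have sumB : Summable (fun k => ‖b k‖) := by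
    obtain ⟨N, hN⟩ := eventually_atTop.mp (decayB (1/2) (by norm_num))
    rw [← summable_nat_add_iff (f := fun k => ‖b k‖) N]
    refine Summable.of_nonneg_of_le (fun k => norm_nonneg _)
      (fun k => hN (k + N) (Nat.le_add_left _ _)) ?_
    have : Summable (fun k : ℕ => ((1:ℝ)/2) ^ N * ((1:ℝ)/2) ^ k) :=
      (summable_geometric_of_lt_one (by norm_num) (by norm_num)).mul_left _
    refine this.congr fun k => ?_
    rw [← pow_add, add_comm]
  -- key bound En f n ≤ tail sum
  have key : ∀ n : ℕ, En f n ≤ ∑' k, ‖b (k + n)‖ := by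
    intro n
    set P : Polynomial ℂ := ∑ k ∈ Finset.range n, Polynomial.C (b k) * Polynomial.X ^ k with hP
    have hdeg : P.degree < (n : WithBot ℕ) := by
      rw [hP]
      refine lt_of_le_of_lt (Polynomial.degree_sum_le _ _) ?_
      refine (Finset.sup_lt_iff (WithBot.bot_lt_coe n)).mpr fun k hk => ?_
      refine lt_of_le_of_lt (Polynomial.degree_C_mul_X_pow_le _ _) ?_
      exact Nat.cast_lt.mpr (Finset.mem_range.mp hk)
    have hEn : En f n ≤ supNorm (fun z => f z - P.eval z) :=
      csInf_le (En_set_bddBelow f n) ⟨P, hdeg, rfl⟩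
    refine hEn.trans ?_
    refine Real.sSup_le ?_ (tsum_nonneg fun k => norm_nonneg _)
    rintro x ⟨z, hz, rfl⟩
    have hz1 : ‖z‖ < 1 := by rwa [mem_ball_zero_iff] at hz
    have hPz : P.eval z = ∑ k ∈ Finset.range n, b k * z ^ k := by
      rw [hP]
      simp [Polynomial.eval_finset_sum]
    have htail : HasSum (fun k => b (k + n) * z ^ (k + n)) (F z - ∑ k ∈ Finset.range n, b k * z ^ k) :=
      ((hasSum_nat_add_iff' n).mpr (hsum z))
    have hfz : f z - P.eval z = ∑' k, b (k + n) * z ^ (k + n) := by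
      rw [← hFf z hz, hPz, htail.tsum_eq]
    show ‖f z - P.eval z‖ ≤ _
    rw [hfz]
    have hsn : Summable (fun k => ‖b (k + n)‖) :=
      (summable_nat_add_iff (f := fun k => ‖b k‖) n).mpr sumB
    have habs : ∀ k, ‖b (k + n) * z ^ (k + n)‖ ≤ ‖b (k + n)‖ := by
      intro k
      rw [norm_mul, norm_pow]
      calc ‖b (k+n)‖ * ‖z‖ ^ (k+n)
          ≤ ‖b (k+n)‖ * 1 := by
            gcongr
            exact pow_le_one₀ (norm_nonneg z) hz1.le
        _ = _ := mul_one _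
    calc ‖∑' k, b (k + n) * z ^ (k + n)‖
        ≤ ∑' k, ‖b (k + n) * z ^ (k + n)‖ := by
          refine norm_tsum_le_tsum_norm ?_
          exact Summable.of_nonneg_of_le (fun k => norm_nonneg _) habs hsn
      _ ≤ ∑' k, ‖b (k + n)‖ := by
          refine Summable.tsum_le_tsum habs ?_ hsn
          exact Summable.of_nonneg_of_le (fun k => norm_nonneg _) habs hsn
  -- conclude
  rw [NormedAddCommGroup.tendsto_nhds_zero]
  intro ε hε
  set e : ℝ := min ε 1 / 4 with he
  have he0 : 0 < e := by positivity
  have he2 : e ≤ 1/4 := by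
    rw [he]
    have : min ε 1 ≤ 1 := min_le_right _ _
    linarith
  have he1 : e < 1 := by linarith
  obtain ⟨N, hN⟩ := eventually_atTop.mp (decayB e he0)
  filter_upwards [eventually_ge_atTop (max N 1)] with n hn
  have hnN : N ≤ n := le_trans (le_max_left _ _) hn
  have hn1 : 1 ≤ n := le_trans (le_max_right _ _) hn
  have htail : (∑' k, ‖b (k + n)‖) ≤ 2 * e ^ n := by
    have hsn : Summable (fun k => ‖b (k + n)‖) :=
      (summable_nat_add_iff (f := fun k => ‖b k‖) n).mpr sumB
    have hge : Summable (fun k : ℕ => e ^ (k + n)) := by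
      refine Summable.congr ((summable_geometric_of_lt_one he0.le he1).mul_right (e ^ n)) ?_
      intro k
      rw [← pow_add]
    calc (∑' k, ‖b (k + n)‖)
        ≤ ∑' k : ℕ, e ^ (k + n) := Summable.tsum_le_tsum (fun k => hN (k + n) (le_trans hnN (Nat.le_add_left _ _))) hsn hge
      _ = (1 - e)⁻¹ * e ^ n := by
          calc (∑' k : ℕ, e ^ (k + n)) = ∑' k : ℕ, e ^ k * e ^ n := by
                apply tsum_congr; intro k; rw [pow_add]
            _ = (∑' k : ℕ, e ^ k) * e ^ n := tsum_mul_right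
            _ = (1 - e)⁻¹ * e ^ n := by rw [tsum_geometric_of_lt_one he0.le he1]
      _ ≤ 2 * e ^ n := by
          gcongr
          rw [inv_le_iff_one_le_mul₀ (by linarith)]
          linarith
  have hEn : En f n ≤ 2 * e ^ n := (key n).trans htail
  have hrpow : En f n ^ (1 / (n:ℝ)) ≤ (2 * e ^ n) ^ (1 / (n:ℝ)) :=
    Real.rpow_le_rpow (En_nonneg f n) hEn (by positivity)
  have heq : ((2:ℝ) * e ^ n) ^ (1 / (n:ℝ)) = 2 ^ (1/(n:ℝ)) * e := by
    rw [Real.mul_rpow (by norm_num) (by positivity), ← Real.rpow_natCast e n,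
      ← Real.rpow_mul he0.le]
    congr 1
    rw [mul_one_div, div_self (by exact_mod_cast Nat.one_le_iff_ne_zero.mp hn1), Real.rpow_one]
  have h2n : (2:ℝ) ^ (1/(n:ℝ)) ≤ 2 := by
    calc (2:ℝ) ^ (1/(n:ℝ)) ≤ 2 ^ (1:ℝ) := by
          apply Real.rpow_le_rpow_of_exponent_le one_le_two
          rw [div_le_one (by exact_mod_cast Nat.pos_of_ne_zero (Nat.one_le_iff_ne_zero.mp hn1))]
          exact_mod_cast hn1
      _ = 2 := Real.rpow_one 2
  have hfinal : En f n ^ (1 / (n:ℝ)) ≤ 2 * e := by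
    refine hrpow.trans ?_
    rw [heq]
    gcongr
  have hnorm : ‖En f n ^ (1 / (n:ℝ))‖ = En f n ^ (1 / (n:ℝ)) :=
    Real.norm_of_nonneg (Real.rpow_nonneg (En_nonneg f n) _)
  rw [hnorm]
  calc En f n ^ (1 / (n:ℝ)) ≤ 2 * e := hfinal
    _ = min ε 1 / 2 := by rw [he]; ring
    _ < ε := by
        have h1 : min ε 1 ≤ ε := min_le_left _ _
        have h2 : 0 < min ε 1 := lt_min hε one_pos
        linarith

end Helpers

theorem stmt0 (f : ℂ → ℂ)
    (hf : AnalyticOnNhd ℂ f (Metric.ball (0 : ℂ) 1))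
    (hb : BddAbove ((fun z => ‖f z‖) '' Metric.ball (0 : ℂ) 1)) :
    Tendsto (fun n : ℕ => En f n ^ (1 / (n : ℝ))) atTop (nhds 0) ↔
      ∃ F : ℂ → ℂ, Differentiable ℂ F ∧ ∀ z ∈ Metric.ball (0 : ℂ) 1, F z = f z := by
  constructor
  · exact fun h => forward hf hb h
  · rintro ⟨F, hFd, hFf⟩
    exact backward F hFd hFf
end
end

section
/- Fix p ≥ 1. Let f be analytic on the open unit disk D with finite Hardy norm ‖f‖_{H_p} := sup_{0<r<1} ((1/(2π)) ∫₀^{2π} |f(r e^{it})|^p dt)^{1/p}. Then lim_{n→∞} E_n(f)^{1/n} = 0 if and only if there exists an entire function F : ℂ → ℂ with F(z) = f(z) for all z ∈ D, where E_n(f) := inf{ ‖f − p‖_{H_p} : p a complex polynomial of degree ≤ n−1 }. -/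
open Filter MeasureTheory

noncomputable section

/-- The set of integral means defining the Hardy norm. -/
def hardyVals (p : ℝ) (f : ℂ → ℂ) : Set ℝ :=
  { y | ∃ r : ℝ, 0 < r ∧ r < 1 ∧
    y = ((1 / (2 * Real.pi)) *
      ∫ t in (0:ℝ)..(2 * Real.pi), ‖f ((r : ℂ) * Complex.exp ((t : ℂ) * Complex.I))‖ ^ p) ^ (1 / p) }

/-- The Hardy norm `‖f‖_{H_p}`. -/
def hardyNorm (p : ℝ) (f : ℂ → ℂ) : ℝ :=
  sSup (hardyVals p f)

/-- Best Hardy-norm approximation of `f` by polynomials of degree at most `n - 1`. -/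
def EnH (p : ℝ) (f : ℂ → ℂ) (n : ℕ) : ℝ :=
  sInf { e : ℝ | ∃ P : Polynomial ℂ, P.degree < (n : WithBot ℕ) ∧
    e = hardyNorm p (fun z => f z - P.eval z) }

/-! ### Auxiliary lemmas -/

namespace Stmt10Aux

open Metric Complex Polynomial intervalIntegral

lemma circle_eq (r t : ℝ) :
    circleMap 0 r t = (r : ℂ) * Complex.exp ((t : ℂ) * Complex.I) := by
  simp [circleMap]

lemma circle_mem_ball {r : ℝ} (hr0 : 0 ≤ r) (hr1 : r < 1) (t : ℝ) :
    circleMap 0 r t ∈ Metric.ball (0 : ℂ) 1 := by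
  rw [mem_ball_zero_iff]
  simp only [norm_circleMap_zero]
  rwa [_root_.abs_of_nonneg hr0]

/-- `(a+b)^p ≤ 2^p * (a^p + b^p)` for nonnegative reals, `0 ≤ p`. -/
lemma add_rpow_le {a b p : ℝ} (ha : 0 ≤ a) (hb : 0 ≤ b) (hp : 0 ≤ p) :
    (a + b) ^ p ≤ 2 ^ p * (a ^ p + b ^ p) := by
  have h1 : a + b ≤ 2 * max a b := by
    rcases max_cases a b with ⟨h, h'⟩ | ⟨h, h'⟩ <;> rw [h] <;> linarith
  have h2 : (a + b) ^ p ≤ (2 * max a b) ^ p :=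
    Real.rpow_le_rpow (by linarith) h1 hp
  have h3 : (2 * max a b) ^ p = 2 ^ p * (max a b) ^ p :=
    Real.mul_rpow (by norm_num) (le_max_of_le_left ha)
  have h4 : (max a b) ^ p ≤ a ^ p + b ^ p := by
    rcases max_cases a b with ⟨h, _⟩ | ⟨h, _⟩ <;> rw [h]
    · nlinarith [Real.rpow_nonneg hb p, Real.rpow_nonneg ha p]
    · nlinarith [Real.rpow_nonneg hb p, Real.rpow_nonneg ha p]
  calc (a + b) ^ p ≤ 2 ^ p * (max a b) ^ p := by rw [← h3]; exact h2
    _ ≤ 2 ^ p * (a ^ p + b ^ p) := by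
        have : (0:ℝ) ≤ 2 ^ p := Real.rpow_nonneg (by norm_num) p
        nlinarith [h4]

/-- Hölder: on `[0, 2π]` the mean of `u` is at most the `p`-mean, `p ≥ 1`. -/
lemma holder_mean {p : ℝ} (hp : 1 ≤ p) {u : ℝ → ℝ} (hu : Continuous u) (hu0 : ∀ t, 0 ≤ u t) :
    (2 * Real.pi)⁻¹ * ∫ t in (0:ℝ)..(2 * Real.pi), u t
      ≤ ((2 * Real.pi)⁻¹ * ∫ t in (0:ℝ)..(2 * Real.pi), u t ^ p) ^ (1 / p) := by
  have hπ : (0:ℝ) < 2 * Real.pi := Real.two_pi_pos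
  have hp0 : (0:ℝ) < p := lt_of_lt_of_le one_pos hp
  set I1 : ℝ := ∫ t in (0:ℝ)..(2 * Real.pi), u t with hI1def
  set Ip : ℝ := ∫ t in (0:ℝ)..(2 * Real.pi), u t ^ p with hIpdef
  have hI1nn : 0 ≤ I1 := intervalIntegral.integral_nonneg hπ.le fun t _ => hu0 t
  have hIpnn : 0 ≤ Ip := intervalIntegral.integral_nonneg hπ.le fun t _ =>
    Real.rpow_nonneg (hu0 t) p
  set μ := volume.restrict (Set.Ioc (0:ℝ) (2 * Real.pi)) with hμdef
  have hup : Continuous fun t => u t ^ p := hu.rpow_const fun t => Or.inr hp0.le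
  have hint1 : Integrable u μ := (hu.integrableOn_Icc).mono_set Set.Ioc_subset_Icc_self
  have hintp : Integrable (fun t => u t ^ p) μ :=
    (hup.integrableOn_Icc).mono_set Set.Ioc_subset_Icc_self
  have h1 : ENNReal.ofReal I1 = ∫⁻ t, ENNReal.ofReal (u t) ∂μ := by
    rw [hI1def, intervalIntegral.integral_of_le hπ.le]
    exact MeasureTheory.ofReal_integral_eq_lintegral_ofReal hint1
      (Filter.Eventually.of_forall hu0)
  have hp' : ENNReal.ofReal Ip = ∫⁻ t, ENNReal.ofReal (u t ^ p) ∂μ := by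
    rw [hIpdef, intervalIntegral.integral_of_le hπ.le]
    exact MeasureTheory.ofReal_integral_eq_lintegral_ofReal hintp
      (Filter.Eventually.of_forall fun t => Real.rpow_nonneg (hu0 t) p)
  have e1 : eLpNorm' u 1 μ = ENNReal.ofReal I1 := by
    rw [MeasureTheory.eLpNorm', h1]
    simp only [ENNReal.rpow_one, one_div_one]
    refine (lintegral_congr fun t => ?_)
    rw [Real.enorm_eq_ofReal (hu0 t)]
  have ep : eLpNorm' u p μ = ENNReal.ofReal Ip ^ (1 / p) := by
    rw [MeasureTheory.eLpNorm', hp']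
    congr 1
    refine lintegral_congr fun t => ?_
    rw [Real.enorm_eq_ofReal (hu0 t), ← ENNReal.ofReal_rpow_of_nonneg (hu0 t) hp0.le]
  have hμuniv : μ Set.univ = ENNReal.ofReal (2 * Real.pi) := by
    rw [hμdef, Measure.restrict_apply_univ, Real.volume_Ioc, sub_zero]
  have key : ENNReal.ofReal I1 ≤ ENNReal.ofReal Ip ^ (1 / p)
      * ENNReal.ofReal (2 * Real.pi) ^ (1 / (1:ℝ) - 1 / p) := by
    rw [← e1, ← ep, ← hμuniv]
    exact MeasureTheory.eLpNorm'_le_eLpNorm'_mul_rpow_measure_univ one_pos hp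
      hu.aestronglyMeasurable
  have main : I1 ≤ Ip ^ (1 / p) * (2 * Real.pi) ^ (1 - 1 / p) := by
    have hfin : ENNReal.ofReal Ip ^ (1 / p)
        * ENNReal.ofReal (2 * Real.pi) ^ (1 / (1:ℝ) - 1 / p) ≠ ⊤ := by
      apply ENNReal.mul_ne_top
      · exact ENNReal.rpow_ne_top_of_nonneg (by positivity) ENNReal.ofReal_ne_top
      · refine ENNReal.rpow_ne_top_of_nonneg ?_ ENNReal.ofReal_ne_top
        rw [one_div_one]
        have : 1 / p ≤ 1 := by
          rw [div_le_one hp0]; exact hp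
        linarith
    have := ENNReal.toReal_mono hfin key
    rw [ENNReal.toReal_ofReal hI1nn, ENNReal.toReal_mul, ← ENNReal.toReal_rpow,
      ← ENNReal.toReal_rpow, ENNReal.toReal_ofReal hIpnn, ENNReal.toReal_ofReal hπ.le] at this
    simpa using this
  rw [Real.mul_rpow (inv_nonneg.mpr hπ.le) hIpnn]
  calc (2 * Real.pi)⁻¹ * I1
      ≤ (2 * Real.pi)⁻¹ * (Ip ^ (1 / p) * (2 * Real.pi) ^ (1 - 1 / p)) :=
        mul_le_mul_of_nonneg_left main (inv_nonneg.mpr hπ.le)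
    _ = ((2 * Real.pi)⁻¹) ^ (1 / p) * Ip ^ (1 / p) := by
        have h5 : ((2 * Real.pi)⁻¹ : ℝ) ^ (1 / p) = (2 * Real.pi) ^ (-(1 / p)) := by
          rw [← Real.rpow_neg_one, ← Real.rpow_mul hπ.le]
          norm_num
        have h6 : (2 * Real.pi)⁻¹ * (2 * Real.pi) ^ (1 - 1 / p)
            = (2 * Real.pi) ^ (-(1 / p)) := by
          rw [← Real.rpow_neg_one, ← Real.rpow_add hπ]
          congr 1
          ring
        rw [h5, ← h6]
        ring

/-- Coefficients of the Cauchy power series in terms of iterated derivatives. -/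
lemma coeff_eq {g : ℂ → ℂ} {R : ℝ} (hR : 0 < R)
    (hg : DifferentiableOn ℂ g (Metric.closedBall (0:ℂ) R)) (n : ℕ) :
    (cauchyPowerSeries g 0 R n fun _ => (1:ℂ)) = (n.factorial : ℂ)⁻¹ * iteratedDeriv n g 0 := by
  lift R to NNReal using hR.le with R' hR'
  have hR0 : 0 < R' := by exact_mod_cast hR
  have h := hg.hasFPowerSeriesOnBall hR0
  have h2 := h.factorial_smul (1:ℂ) n
  rw [← iteratedDeriv_eq_iteratedFDeriv] at h2
  have hfac : ((n.factorial : ℂ)) ≠ 0 := Nat.cast_ne_zero.2 n.factorial_ne_zero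
  rw [← h2, nsmul_eq_mul, inv_mul_cancel_left₀ hfac]

/-- Cauchy-type estimate for coefficients of the Cauchy power series. -/
lemma cps_norm_le (g : ℂ → ℂ) {R : ℝ} (hR : 0 < R) (n : ℕ) :
    ‖cauchyPowerSeries g 0 R n fun _ => (1:ℂ)‖ * R ^ n
      ≤ (2 * Real.pi)⁻¹ * ∫ θ in (0:ℝ)..(2 * Real.pi), ‖g (circleMap 0 R θ)‖ := by
  have h1 : ‖cauchyPowerSeries g 0 R n fun _ => (1:ℂ)‖ ≤ ‖cauchyPowerSeries g 0 R n‖ := by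
    simpa using (cauchyPowerSeries g 0 R n).le_opNorm fun _ => (1:ℂ)
  have h2 := norm_cauchyPowerSeries_le g 0 R n
  have hM : (0:ℝ) ≤ (2 * Real.pi)⁻¹ * ∫ θ in (0:ℝ)..(2 * Real.pi), ‖g (circleMap 0 R θ)‖ := by
    apply mul_nonneg (inv_nonneg.mpr Real.two_pi_pos.le)
    exact intervalIntegral.integral_nonneg Real.two_pi_pos.le fun _ _ => norm_nonneg _
  calc ‖cauchyPowerSeries g 0 R n fun _ => (1:ℂ)‖ * R ^ n
      ≤ ‖cauchyPowerSeries g 0 R n‖ * R ^ n :=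
        mul_le_mul_of_nonneg_right h1 (pow_nonneg hR.le n)
    _ ≤ (((2 * Real.pi)⁻¹ * ∫ θ in (0:ℝ)..(2 * Real.pi), ‖g (circleMap 0 R θ)‖) * |R|⁻¹ ^ n)
        * R ^ n := mul_le_mul_of_nonneg_right h2 (pow_nonneg hR.le n)
    _ = ((2 * Real.pi)⁻¹ * ∫ θ in (0:ℝ)..(2 * Real.pi), ‖g (circleMap 0 R θ)‖)
        * (|R|⁻¹ ^ n * R ^ n) := by ring
    _ = (2 * Real.pi)⁻¹ * ∫ θ in (0:ℝ)..(2 * Real.pi), ‖g (circleMap 0 R θ)‖ := by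
        rw [abs_of_pos hR, ← mul_pow, inv_mul_cancel₀ hR.ne', one_pow, mul_one]

/-- Iterated derivative of a polynomial. -/
lemma polyIter (k : ℕ) (P : Polynomial ℂ) :
    iteratedDeriv k (fun z : ℂ => P.eval z) = fun z => ((Polynomial.derivative)^[k] P).eval z := by
  induction k generalizing P with
  | zero => simp
  | succ k ih =>
    rw [iteratedDeriv_succ']
    have hder : deriv (fun z : ℂ => P.eval z) = fun z => (Polynomial.derivative P).eval z :=
      funext fun z => Polynomial.deriv P
    rw [hder, ih (Polynomial.derivative P), Function.iterate_succ_apply]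

lemma polyIter_zero {n : ℕ} {P : Polynomial ℂ} (hP : P.degree < (n : WithBot ℕ)) :
    iteratedDeriv n (fun z : ℂ => P.eval z) 0 = 0 := by
  rcases eq_or_ne P 0 with rfl | hP0
  · rw [polyIter]
    simp
  · have : P.natDegree < n := (Polynomial.natDegree_lt_iff_degree_lt hP0).2 hP
    rw [polyIter, Polynomial.iterate_derivative_eq_zero this]
    simp

lemma contOn_circle {g : ℂ → ℂ} (hg : ContinuousOn g (Metric.ball (0:ℂ) 1))
    {r : ℝ} (hr0 : 0 < r) (hr1 : r < 1) :
    Continuous fun t : ℝ => g (circleMap 0 r t) :=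
  hg.comp_continuous (continuous_circleMap 0 r) (circle_mem_ball hr0.le hr1)

lemma hardyVals_nonneg (p : ℝ) (g : ℂ → ℂ) : ∀ y ∈ hardyVals p g, 0 ≤ y := by
  rintro y ⟨r, hr0, hr1, rfl⟩
  apply Real.rpow_nonneg
  apply mul_nonneg (by positivity)
  exact intervalIntegral.integral_nonneg Real.two_pi_pos.le fun t _ =>
    Real.rpow_nonneg (norm_nonneg _) p

lemma hardyNorm_nonneg (p : ℝ) (g : ℂ → ℂ) : 0 ≤ hardyNorm p g :=
  Real.sSup_nonneg (hardyVals_nonneg p g)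

lemma EnH_nonneg (p : ℝ) (f : ℂ → ℂ) (n : ℕ) : 0 ≤ EnH p f n := by
  apply Real.sInf_nonneg
  rintro e ⟨P, hP, rfl⟩
  exact hardyNorm_nonneg p _

lemma hasCPS {g : ℂ → ℂ} {R : ℝ} (hR : 0 < R)
    (hg : DifferentiableOn ℂ g (Metric.closedBall (0:ℂ) R)) :
    HasFPowerSeriesAt g (cauchyPowerSeries g 0 R) 0 := by
  lift R to NNReal using hR.le with R'
  exact (hg.hasFPowerSeriesOnBall (by exact_mod_cast hR)).hasFPowerSeriesAt

/-- Key coefficient bound for the forward direction. -/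
lemma key_f {f : ℂ → ℂ} (hf : AnalyticOnNhd ℂ f (Metric.ball (0 : ℂ) 1)) {p : ℝ} (hp : 1 ≤ p)
    {n : ℕ} {P : Polynomial ℂ} (hP : P.degree < (n : WithBot ℕ))
    {r : ℝ} (hr0 : 0 < r) (hr1 : r < 1) :
    ‖(n.factorial : ℂ)⁻¹ * iteratedDeriv n f 0‖ * r ^ n
      ≤ ((1 / (2 * Real.pi)) * ∫ t in (0:ℝ)..(2 * Real.pi),
          ‖(fun z => f z - P.eval z) ((r : ℂ) * Complex.exp ((t : ℂ) * Complex.I))‖ ^ p)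
          ^ (1 / p) := by
  set g : ℂ → ℂ := fun z => f z - P.eval z with hgdef
  have hball : Metric.closedBall (0:ℂ) r ⊆ Metric.ball (0:ℂ) 1 :=
    closedBall_subset_ball hr1
  have hfd : DifferentiableOn ℂ f (Metric.closedBall (0:ℂ) r) := (hf.differentiableOn).mono hball
  have hPd : DifferentiableOn ℂ (fun z : ℂ => P.eval z) (Metric.closedBall (0:ℂ) r) :=
    (P.differentiable).differentiableOn
  have hgd : DifferentiableOn ℂ g (Metric.closedBall (0:ℂ) r) := hfd.sub hPd
  -- the `n`-th coefficient of `g` equals that of `f`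
  have h1 := hasCPS hr0 hgd
  have h2 : HasFPowerSeriesAt g
      (cauchyPowerSeries f 0 r - cauchyPowerSeries (fun z : ℂ => P.eval z) 0 r) 0 :=
    (hasCPS hr0 hfd).sub (hasCPS hr0 hPd)
  have heq := h1.eq_formalMultilinearSeries h2
  have hc : (cauchyPowerSeries g 0 r n fun _ => (1:ℂ))
      = (n.factorial : ℂ)⁻¹ * iteratedDeriv n f 0 := by
    rw [heq]
    have : ((cauchyPowerSeries f 0 r - cauchyPowerSeries (fun z : ℂ => P.eval z) 0 r) n
        fun _ => (1:ℂ))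
        = (cauchyPowerSeries f 0 r n fun _ => (1:ℂ))
          - (cauchyPowerSeries (fun z : ℂ => P.eval z) 0 r n fun _ => (1:ℂ)) := rfl
    rw [this, coeff_eq hr0 hfd, coeff_eq hr0 hPd, polyIter_zero hP, mul_zero, sub_zero]
  have hbound := cps_norm_le g hr0 n
  rw [hc] at hbound
  have hgc : Continuous fun t : ℝ => g (circleMap 0 r t) :=
    contOn_circle (hf.continuousOn.sub (P.continuous.continuousOn)) hr0 hr1
  have habs : Continuous fun t : ℝ => ‖g (circleMap 0 r t)‖ :=
    continuous_norm.comp hgc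
  have hol := holder_mean hp habs (fun t => norm_nonneg _)
  calc ‖(n.factorial : ℂ)⁻¹ * iteratedDeriv n f 0‖ * r ^ n
      ≤ (2 * Real.pi)⁻¹ * ∫ θ in (0:ℝ)..(2 * Real.pi), ‖g (circleMap 0 r θ)‖ := hbound
    _ ≤ ((2 * Real.pi)⁻¹ * ∫ t in (0:ℝ)..(2 * Real.pi),
          ‖g (circleMap 0 r t)‖ ^ p) ^ (1 / p) := hol
    _ = ((1 / (2 * Real.pi)) * ∫ t in (0:ℝ)..(2 * Real.pi),
          ‖g ((r : ℂ) * Complex.exp ((t : ℂ) * Complex.I))‖ ^ p) ^ (1 / p) := by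
        simp only [← circle_eq, one_div]

/-- `hardyVals` of `f - P` is bounded above when that of `f` is. -/
lemma bdd_sub {p : ℝ} (hp : 1 ≤ p) {f : ℂ → ℂ} (hf : AnalyticOnNhd ℂ f (Metric.ball (0 : ℂ) 1))
    (hb : BddAbove (hardyVals p f)) (P : Polynomial ℂ) :
    BddAbove (hardyVals p (fun z => f z - P.eval z)) := by
  have hπ : (0:ℝ) < 2 * Real.pi := Real.two_pi_pos
  have hp0 : (0:ℝ) < p := lt_of_lt_of_le one_pos hp
  obtain ⟨C, hC⟩ : ∃ C, ∀ z ∈ Metric.closedBall (0:ℂ) 1, ‖P.eval z‖ ≤ C :=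
    (isCompact_closedBall (0:ℂ) 1).exists_bound_of_continuousOn P.continuous.continuousOn
  set C' := max C 0 with hC'def
  have hC'0 : (0:ℝ) ≤ C' := le_max_right _ _
  set M := sSup (hardyVals p f) with hMdef
  have hM0 : 0 ≤ M := Real.sSup_nonneg (hardyVals_nonneg p f)
  refine ⟨(2 ^ p * (M ^ p + C' ^ p)) ^ (1 / p), ?_⟩
  rintro y ⟨r, hr0, hr1, rfl⟩
  have hfc : Continuous fun t : ℝ => f (circleMap 0 r t) :=
    contOn_circle hf.continuousOn hr0 hr1
  have hgc : Continuous fun t : ℝ => f (circleMap 0 r t) - P.eval (circleMap 0 r t) :=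
    hfc.sub (P.continuous.comp (continuous_circleMap 0 r))
  have habsp : Continuous fun t : ℝ => ‖f (circleMap 0 r t)
      - P.eval (circleMap 0 r t)‖ ^ p :=
    (continuous_norm.comp hgc).rpow_const fun _ => Or.inr hp0.le
  have hfabsp : Continuous fun t : ℝ => ‖f (circleMap 0 r t)‖ ^ p :=
    (continuous_norm.comp hfc).rpow_const fun _ => Or.inr hp0.le
  -- pointwise bound
  have hpt : ∀ t : ℝ, ‖f (circleMap 0 r t) - P.eval (circleMap 0 r t)‖ ^ p
      ≤ 2 ^ p * (‖f (circleMap 0 r t)‖ ^ p + C' ^ p) := by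
    intro t
    have hPb : ‖P.eval (circleMap 0 r t)‖ ≤ C' := by
      refine le_trans ?_ (le_max_left C 0)
      apply hC
      rw [Metric.mem_closedBall, Complex.dist_eq, sub_zero]
      have : ‖circleMap 0 r t‖ = |r| := norm_circleMap_zero r t
      rw [this, _root_.abs_of_pos hr0]
      exact hr1.le
    have h1 : ‖f (circleMap 0 r t) - P.eval (circleMap 0 r t)‖
        ≤ ‖f (circleMap 0 r t)‖ + C' := by
      refine le_trans (norm_sub_le _ _) ?_
      exact add_le_add_right hPb _
    calc ‖f (circleMap 0 r t) - P.eval (circleMap 0 r t)‖ ^ p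
        ≤ (‖f (circleMap 0 r t)‖ + C') ^ p :=
          Real.rpow_le_rpow (norm_nonneg _) h1 hp0.le
      _ ≤ 2 ^ p * (‖f (circleMap 0 r t)‖ ^ p + C' ^ p) :=
          add_rpow_le (norm_nonneg _) hC'0 hp0.le
  -- integrate
  set A := (1 / (2 * Real.pi)) * ∫ t in (0:ℝ)..(2 * Real.pi),
      ‖f ((r : ℂ) * Complex.exp ((t : ℂ) * Complex.I))‖ ^ p with hAdef
  have hAvals : A ^ (1 / p) ∈ hardyVals p f := ⟨r, hr0, hr1, rfl⟩
  have hA0 : 0 ≤ A := by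
    apply mul_nonneg (by positivity)
    exact intervalIntegral.integral_nonneg hπ.le fun t _ =>
      Real.rpow_nonneg (norm_nonneg _) p
  have hAM : A ≤ M ^ p := by
    have h1 : A ^ (1 / p) ≤ M := le_csSup hb hAvals
    have h2 : (A ^ (1 / p)) ^ p ≤ M ^ p :=
      Real.rpow_le_rpow (Real.rpow_nonneg hA0 _) h1 hp0.le
    rwa [← Real.rpow_mul hA0, one_div_mul_cancel hp0.ne', Real.rpow_one] at h2
  have hint : ∫ t in (0:ℝ)..(2 * Real.pi),
      ‖f ((r : ℂ) * Complex.exp ((t : ℂ) * Complex.I))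
        - P.eval ((r : ℂ) * Complex.exp ((t : ℂ) * Complex.I))‖ ^ p
      ≤ ∫ t in (0:ℝ)..(2 * Real.pi),
          2 ^ p * (‖f ((r : ℂ) * Complex.exp ((t : ℂ) * Complex.I))‖ ^ p + C' ^ p) := by
    simp only [← circle_eq]
    apply intervalIntegral.integral_mono_on hπ.le
    · exact habsp.intervalIntegrable _ _
    · exact (continuous_const.mul (hfabsp.add continuous_const)).intervalIntegrable _ _
    · exact fun t _ => hpt t
  have hrhs : ∫ t in (0:ℝ)..(2 * Real.pi),
      2 ^ p * (‖f ((r : ℂ) * Complex.exp ((t : ℂ) * Complex.I))‖ ^ p + C' ^ p)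
      = 2 ^ p * ((∫ t in (0:ℝ)..(2 * Real.pi),
          ‖f ((r : ℂ) * Complex.exp ((t : ℂ) * Complex.I))‖ ^ p)
          + (2 * Real.pi) * C' ^ p) := by
    rw [intervalIntegral.integral_const_mul]
    congr 1
    have hint1 : IntervalIntegrable
        (fun t : ℝ => ‖f ((r : ℂ) * Complex.exp ((t : ℂ) * Complex.I))‖ ^ p)
        volume 0 (2 * Real.pi) := by
      have := hfabsp.intervalIntegrable (μ := volume) (0:ℝ) (2 * Real.pi)
      simpa only [circle_eq] using this
    rw [intervalIntegral.integral_add hint1 ((continuous_const (y := C' ^ p)).intervalIntegrable _ _)]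
    rw [intervalIntegral.integral_const]
    simp [smul_eq_mul]
  -- final bound
  have hbase : (1 / (2 * Real.pi)) * ∫ t in (0:ℝ)..(2 * Real.pi),
      ‖(fun z => f z - P.eval z) ((r : ℂ) * Complex.exp ((t : ℂ) * Complex.I))‖ ^ p
      ≤ 2 ^ p * (M ^ p + C' ^ p) := by
    have h2p : (0:ℝ) ≤ 2 ^ p := Real.rpow_nonneg (by norm_num) p
    have hCp : (0:ℝ) ≤ C' ^ p := Real.rpow_nonneg hC'0 p
    have step : (1 / (2 * Real.pi)) * ∫ t in (0:ℝ)..(2 * Real.pi),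
        ‖(fun z => f z - P.eval z) ((r : ℂ) * Complex.exp ((t : ℂ) * Complex.I))‖ ^ p
        ≤ (1 / (2 * Real.pi)) * (2 ^ p * ((∫ t in (0:ℝ)..(2 * Real.pi),
            ‖f ((r : ℂ) * Complex.exp ((t : ℂ) * Complex.I))‖ ^ p)
            + (2 * Real.pi) * C' ^ p)) := by
      apply mul_le_mul_of_nonneg_left _ (by positivity)
      rw [← hrhs]
      exact hint
    refine le_trans step ?_
    have : (1 / (2 * Real.pi)) * (2 ^ p * ((∫ t in (0:ℝ)..(2 * Real.pi),
        ‖f ((r : ℂ) * Complex.exp ((t : ℂ) * Complex.I))‖ ^ p)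
        + (2 * Real.pi) * C' ^ p)) = 2 ^ p * (A + C' ^ p) := by
      rw [hAdef]
      set J := ∫ t in (0:ℝ)..(2 * Real.pi), ‖f ((r : ℂ) * Complex.exp ((t : ℂ) * Complex.I))‖ ^ p
      clear_value J
      field_simp
    rw [this]
    have := add_le_add_right hAM (C' ^ p)
    nlinarith [h2p, this]
  calc ((1 / (2 * Real.pi)) * ∫ t in (0:ℝ)..(2 * Real.pi),
      ‖(fun z => f z - P.eval z) ((r : ℂ) * Complex.exp ((t : ℂ) * Complex.I))‖ ^ p)
      ^ (1 / p)
      ≤ (2 ^ p * (M ^ p + C' ^ p)) ^ (1 / p) := by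
        apply Real.rpow_le_rpow _ hbase (by positivity)
        apply mul_nonneg (by positivity)
        exact intervalIntegral.integral_nonneg hπ.le fun t _ =>
          Real.rpow_nonneg (norm_nonneg _) p

end Stmt10Aux

open Stmt10Aux Metric Complex Polynomial in
theorem stmt10 (p : ℝ) (hp : 1 ≤ p) (f : ℂ → ℂ)
    (hf : AnalyticOnNhd ℂ f (Metric.ball (0 : ℂ) 1))
    (hb : BddAbove (hardyVals p f)) :
    Tendsto (fun n : ℕ => EnH p f n ^ (1 / (n : ℝ))) atTop (nhds 0) ↔
      ∃ F : ℂ → ℂ, Differentiable ℂ F ∧ ∀ z ∈ Metric.ball (0 : ℂ) 1, F z = f z := by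
  constructor
  · -- forward: rapid decay of best approximations gives an entire extension
    intro htend
    set a : ℕ → ℂ := fun n => (n.factorial : ℂ)⁻¹ * iteratedDeriv n f 0 with hadef
    have step2 : ∀ n : ℕ, ‖a n‖ ≤ EnH p f n := by
      intro n
      have step1 : ∀ r ∈ Set.Ioo (0:ℝ) 1, ‖a n‖ * r ^ n ≤ EnH p f n := by
        rintro r ⟨hr0, hr1⟩
        apply le_csInf
        · refine ⟨hardyNorm p (fun z => f z - (0 : Polynomial ℂ).eval z), 0, ?_, rfl⟩
          rw [Polynomial.degree_zero]
          exact WithBot.bot_lt_coe n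
        · rintro e ⟨P, hP, rfl⟩
          refine le_trans (key_f hf hp hP hr0 hr1) ?_
          exact le_csSup (bdd_sub hp hf hb P) ⟨r, hr0, hr1, rfl⟩
      have hto : Tendsto (fun r : ℝ => ‖a n‖ * r ^ n) (nhdsWithin 1 (Set.Iio 1))
          (nhds (‖a n‖)) := by
        have hc : Continuous fun r : ℝ => ‖a n‖ * r ^ n := by continuity
        have h := (hc.tendsto 1).mono_left (nhdsWithin_le_nhds (s := Set.Iio 1))
        simpa using h
      exact le_of_tendsto hto (Filter.eventually_of_mem
        (Ioo_mem_nhdsLT_of_mem ⟨zero_lt_one, le_refl 1⟩) step1)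
    have step3 : Tendsto (fun n : ℕ => ‖a n‖ ^ (1 / (n:ℝ))) atTop (nhds 0) := by
      apply squeeze_zero (fun n => Real.rpow_nonneg (norm_nonneg _) _) (fun n => ?_) htend
      exact Real.rpow_le_rpow (norm_nonneg _) (step2 n) (by positivity)
    have hsum : ∀ r' : NNReal,
        Summable fun n : ℕ => ‖FormalMultilinearSeries.ofScalars ℂ a n‖ * (r' : ℝ) ^ n := by
      intro r'
      have hgeo : Summable fun n : ℕ => ((1:ℝ)/2) ^ n :=
        summable_geometric_of_lt_one (by norm_num) (by norm_num)
      apply Summable.of_norm_bounded_eventually_nat hgeo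
      set ε : ℝ := ((2:ℝ) * ((r' : ℝ) + 1))⁻¹ with hεdef
      have hε0 : 0 < ε := by positivity
      have hev : ∀ᶠ n : ℕ in atTop, ‖a n‖ ^ (1/(n:ℝ)) < ε :=
        step3.eventually_lt_const hε0
      filter_upwards [hev, Filter.eventually_ge_atTop 1] with n hn h1
      have hn0 : (n:ℝ) ≠ 0 := Nat.cast_ne_zero.2 (by omega)
      have hxnn : (0:ℝ) ≤ ‖a n‖ := norm_nonneg _
      have hray : ‖a n‖ ≤ ε ^ n := by
        have h2 : (‖a n‖ ^ (1/(n:ℝ))) ^ (n:ℕ) ≤ ε ^ n :=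
          pow_le_pow_left₀ (Real.rpow_nonneg hxnn _) hn.le n
        rwa [← Real.rpow_natCast (‖a n‖ ^ (1/(n:ℝ))) n, ← Real.rpow_mul hxnn, one_div,
          inv_mul_cancel₀ hn0, Real.rpow_one] at h2
      have hεr : ε * (r' : ℝ) ≤ 1/2 := by
        rw [hεdef, ← div_eq_inv_mul]
        rw [div_le_iff₀ (by positivity)]
        have := r'.coe_nonneg
        nlinarith
      rw [Real.norm_eq_abs, _root_.abs_of_nonneg (by positivity),
        FormalMultilinearSeries.ofScalars_norm]
      calc ‖a n‖ * (r' : ℝ) ^ n ≤ ε ^ n * (r' : ℝ) ^ n := by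
            exact mul_le_mul_of_nonneg_right hray (by positivity)
        _ = (ε * (r' : ℝ)) ^ n := (mul_pow _ _ _).symm
        _ ≤ ((1:ℝ)/2) ^ n := pow_le_pow_left₀ (by positivity) hεr n
    set ps := FormalMultilinearSeries.ofScalars ℂ a with hpsdef
    have hrad : ps.radius = ⊤ := ps.radius_eq_top_of_summable_norm hsum
    have hps0 : 0 < ps.radius := by rw [hrad]; exact ENNReal.zero_lt_top
    have hball := ps.hasFPowerSeriesOnBall hps0
    refine ⟨ps.sum, ?_, ?_⟩
    · intro z
      have hz : z ∈ EMetric.ball (0:ℂ) ps.radius := by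
        rw [hrad]; exact EMetric.mem_ball.2 (edist_lt_top z 0)
      exact (hball.analyticAt_of_mem hz).differentiableAt
    · intro z hz
      have hdiff : DifferentiableOn ℂ f (Metric.ball (0:ℂ) 1) := hf.differentiableOn
      have hs := Complex.hasSum_taylorSeries_on_ball hdiff hz
      have hs' : HasSum (fun n : ℕ => ps n fun _ => z) (f z) := by
        convert hs using 2 with n
        · rfl
        rw [hpsdef, FormalMultilinearSeries.ofScalars_apply_eq]
        simp only [hadef, smul_eq_mul, sub_zero]
        ring
      exact hs'.tsum_eq
  · -- backward: entire extension gives rapid decay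
    rintro ⟨F, hFd, hFf⟩
    have hπ : (0:ℝ) < 2 * Real.pi := Real.two_pi_pos
    have hp0 : (0:ℝ) < p := lt_of_lt_of_le one_pos hp
    have hEnn : ∀ n, 0 ≤ EnH p f n := EnH_nonneg p f
    rw [Metric.tendsto_atTop]
    intro ε hε
    set R : ℝ := max 2 (2/ε + 1) with hRdef
    have hR2 : (2:ℝ) ≤ R := le_max_left _ _
    have hR0 : (0:ℝ) < R := by linarith
    have hR1 : (1:ℝ) < R := by linarith
    have hRinv : R⁻¹ < ε / 2 := by
      have h1 : 2/ε < R := lt_of_lt_of_le (by linarith [div_pos two_pos hε]) (le_max_right _ _)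
      have h2 : (0:ℝ) < 2/ε := div_pos two_pos hε
      have := (inv_strictAnti₀ h2 h1)
      rwa [show (2/ε : ℝ)⁻¹ = ε/2 by field_simp] at this
    have hRinv0 : (0:ℝ) ≤ R⁻¹ := by positivity
    have hRinv1 : R⁻¹ < 1 := by
      rw [inv_lt_one_iff₀]
      right; exact hR1
    set CR : ℝ := (2 * Real.pi)⁻¹ * ∫ θ in (0:ℝ)..(2 * Real.pi), ‖F (circleMap 0 R θ)‖ with hCRdef
    have hCR0 : 0 ≤ CR := mul_nonneg (by positivity)
      (intervalIntegral.integral_nonneg hπ.le fun _ _ => norm_nonneg _)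
    set a : ℕ → ℂ := fun k => (k.factorial : ℂ)⁻¹ * iteratedDeriv k F 0 with hadef
    have hcoef : ∀ k : ℕ, ‖a k‖ ≤ CR * R⁻¹ ^ k := by
      intro k
      have h1 := cps_norm_le F hR0 k
      rw [coeff_eq hR0 hFd.differentiableOn k] at h1
      have hRk : (0:ℝ) < R ^ k := by positivity
      have h2 : ‖a k‖ * R ^ k ≤ CR := h1
      rw [← le_div_iff₀ hRk] at h2
      rwa [div_eq_mul_inv, ← inv_pow] at h2
    set D : ℝ := 2 * CR + 1 with hDdef
    have hD1 : (1:ℝ) ≤ D := by linarith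
    have hD0 : (0:ℝ) < D := by linarith
    have hEb : ∀ n : ℕ, EnH p f n ≤ D * R⁻¹ ^ n := by
      intro n
      set P : Polynomial ℂ := ∑ k ∈ Finset.range n, Polynomial.C (a k) * Polynomial.X ^ k
        with hPdef
      have hdeg : P.degree < (n : WithBot ℕ) := by
        apply lt_of_le_of_lt (Polynomial.degree_sum_le _ _)
        refine (Finset.sup_lt_iff (WithBot.bot_lt_coe n)).2 ?_
        intro k hk
        refine lt_of_le_of_lt (Polynomial.degree_C_mul_X_pow_le k _) ?_
        exact (WithBot.coe_lt_coe).2 (Finset.mem_range.mp hk)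
      have hrem : ∀ z : ℂ, ‖z‖ ≤ 1 → ‖F z - P.eval z‖ ≤ 2 * CR * R⁻¹ ^ n := by
        intro z hz
        have hsz : HasSum (fun k : ℕ => a k * z ^ k) (F z) := by
          have h := Complex.hasSum_taylorSeries_of_entire hFd 0 z
          convert h using 2 with k
          · rfl
          simp only [hadef, smul_eq_mul, sub_zero]
          ring
        have heval : P.eval z = ∑ k ∈ Finset.range n, a k * z ^ k := by
          simp [hPdef, Polynomial.eval_finset_sum]
        have hshift : HasSum (fun k : ℕ => a (k + n) * z ^ (k + n)) (F z - P.eval z) := by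
          rw [heval]
          exact (hasSum_nat_add_iff' n).2 hsz
        have hbnd : ∀ k : ℕ, ‖a (k + n) * z ^ (k + n)‖ ≤ CR * R⁻¹ ^ n * R⁻¹ ^ k := by
          intro k
          rw [norm_mul, norm_pow]
          have h1 : ‖z‖ ^ (k + n) ≤ 1 :=
            pow_le_one₀ (norm_nonneg z) hz
          calc ‖a (k+n)‖ * ‖z‖ ^ (k+n) ≤ ‖a (k+n)‖ * 1 :=
                mul_le_mul_of_nonneg_left h1 (norm_nonneg _)
            _ = ‖a (k+n)‖ := mul_one _
            _ ≤ CR * R⁻¹ ^ (k+n) := hcoef (k+n)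
            _ = CR * R⁻¹ ^ n * R⁻¹ ^ k := by rw [pow_add]; ring
        have hsums : Summable fun k : ℕ => CR * R⁻¹ ^ n * R⁻¹ ^ k :=
          (summable_geometric_of_lt_one hRinv0 hRinv1).mul_left _
        have hsumnorm : Summable fun k : ℕ => ‖a (k + n) * z ^ (k + n)‖ :=
          Summable.of_nonneg_of_le (fun k => norm_nonneg _) hbnd hsums
        have heq : F z - P.eval z = ∑' k : ℕ, a (k + n) * z ^ (k + n) := hshift.tsum_eq.symm
        rw [heq]
        calc ‖∑' k : ℕ, a (k + n) * z ^ (k + n)‖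
            ≤ ∑' k : ℕ, ‖a (k + n) * z ^ (k + n)‖ := norm_tsum_le_tsum_norm hsumnorm
          _ ≤ ∑' k : ℕ, CR * R⁻¹ ^ n * R⁻¹ ^ k := Summable.tsum_le_tsum hbnd hsumnorm hsums
          _ = CR * R⁻¹ ^ n * (1 - R⁻¹)⁻¹ := by
              rw [tsum_mul_left, tsum_geometric_of_lt_one hRinv0 hRinv1]
          _ ≤ CR * R⁻¹ ^ n * 2 := by
              have h2 : (1 - R⁻¹)⁻¹ ≤ 2 := by
                have h3 : (1:ℝ)/2 ≤ 1 - R⁻¹ := by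
                  have : R⁻¹ ≤ 1/2 := by
                    rw [inv_le_comm₀ (by positivity) (by norm_num)]
                    simpa using hR2
                  linarith
                calc (1 - R⁻¹)⁻¹ ≤ ((1:ℝ)/2)⁻¹ := by
                      apply inv_anti₀ (by norm_num) h3
                  _ = 2 := by norm_num
              have : (0:ℝ) ≤ CR * R⁻¹ ^ n := by positivity
              nlinarith
          _ = 2 * CR * R⁻¹ ^ n := by ring
      have hHN : hardyNorm p (fun z => f z - P.eval z) ≤ 2 * CR * R⁻¹ ^ n := by
        apply Real.sSup_le _ (by positivity)
        rintro y ⟨r, hr0, hr1, rfl⟩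
        set B := 2 * CR * R⁻¹ ^ n with hBdef
        have hB0 : 0 ≤ B := by positivity
        have hfF : ∀ t : ℝ, f ((r:ℂ) * Complex.exp ((t:ℂ) * Complex.I))
            = F ((r:ℂ) * Complex.exp ((t:ℂ) * Complex.I)) := by
          intro t
          refine (hFf _ ?_).symm
          rw [← circle_eq]
          exact circle_mem_ball hr0.le hr1 t
        have hpt : ∀ t : ℝ,
            ‖(fun z => f z - P.eval z) ((r:ℂ) * Complex.exp ((t:ℂ) * Complex.I))‖ ^ p
            ≤ B ^ p := by
          intro t
          apply Real.rpow_le_rpow (norm_nonneg _) _ hp0.le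
          simp only [hfF t]
          apply hrem
          rw [← circle_eq]
          have h4 : ‖circleMap 0 r t‖ = |r| := norm_circleMap_zero r t
          rw [h4, _root_.abs_of_pos hr0]
          exact hr1.le
        have hic : Continuous fun t : ℝ =>
            ‖(fun z => f z - P.eval z) ((r:ℂ) * Complex.exp ((t:ℂ) * Complex.I))‖ ^ p := by
          have hcF : Continuous fun t : ℝ => F (circleMap 0 r t) - P.eval (circleMap 0 r t) :=
            ((hFd.continuous.comp (continuous_circleMap 0 r)).sub
              (P.continuous.comp (continuous_circleMap 0 r)))
          have : Continuous fun t : ℝ =>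
              ‖F (circleMap 0 r t) - P.eval (circleMap 0 r t)‖ ^ p :=
            (continuous_norm.comp hcF).rpow_const fun _ => Or.inr hp0.le
          refine this.congr fun t => ?_
          simp only [circle_eq, hfF t]
        have hIle : ∫ t in (0:ℝ)..(2 * Real.pi),
            ‖(fun z => f z - P.eval z) ((r:ℂ) * Complex.exp ((t:ℂ) * Complex.I))‖ ^ p
            ≤ (2 * Real.pi) * B ^ p := by
          have := intervalIntegral.integral_mono_on hπ.le (hic.intervalIntegrable _ _)
            ((continuous_const (y := B ^ p)).intervalIntegrable (μ := volume) _ _)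
            (fun t _ => hpt t)
          rwa [intervalIntegral.integral_const, smul_eq_mul, sub_zero] at this
        have hbase : (1 / (2 * Real.pi)) * ∫ t in (0:ℝ)..(2 * Real.pi),
            ‖(fun z => f z - P.eval z) ((r:ℂ) * Complex.exp ((t:ℂ) * Complex.I))‖ ^ p
            ≤ B ^ p := by
          have h5 := mul_le_mul_of_nonneg_left hIle
            (le_of_lt (by positivity : (0:ℝ) < 1 / (2 * Real.pi)))
          calc (1 / (2 * Real.pi)) * ∫ t in (0:ℝ)..(2 * Real.pi),
              ‖(fun z => f z - P.eval z) ((r:ℂ) * Complex.exp ((t:ℂ) * Complex.I))‖ ^ p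
              ≤ (1 / (2 * Real.pi)) * ((2 * Real.pi) * B ^ p) := h5
            _ = B ^ p := by field_simp
        calc ((1 / (2 * Real.pi)) * ∫ t in (0:ℝ)..(2 * Real.pi),
            ‖(fun z => f z - P.eval z) ((r:ℂ) * Complex.exp ((t:ℂ) * Complex.I))‖ ^ p)
            ^ (1 / p)
            ≤ (B ^ p) ^ (1 / p) := by
              apply Real.rpow_le_rpow _ hbase (by positivity)
              apply mul_nonneg (by positivity)
              exact intervalIntegral.integral_nonneg hπ.le fun t _ =>
                Real.rpow_nonneg (norm_nonneg _) p
          _ = B := by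
              rw [← Real.rpow_mul hB0, mul_one_div, div_self hp0.ne', Real.rpow_one]
      have hmem : hardyNorm p (fun z => f z - P.eval z) ∈
          { e : ℝ | ∃ Q : Polynomial ℂ, Q.degree < (n : WithBot ℕ) ∧
            e = hardyNorm p (fun z => f z - Q.eval z) } := ⟨P, hdeg, rfl⟩
      have hbb : BddBelow { e : ℝ | ∃ Q : Polynomial ℂ, Q.degree < (n : WithBot ℕ) ∧
          e = hardyNorm p (fun z => f z - Q.eval z) } := by
        refine ⟨0, ?_⟩
        rintro e ⟨Q, hQ, rfl⟩
        exact hardyNorm_nonneg p _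
      refine le_trans (csInf_le hbb hmem) (le_trans hHN ?_)
      have : (0:ℝ) ≤ R⁻¹ ^ n := by positivity
      nlinarith
    have hDlim : Tendsto (fun n : ℕ => D ^ (1/(n:ℝ))) atTop (nhds 1) := by
      have h1 : Tendsto (fun n : ℕ => Real.log D * (1/(n:ℝ))) atTop (nhds 0) := by
        simpa using tendsto_one_div_atTop_nhds_zero_nat.const_mul (Real.log D)
      have h2 := (Real.continuous_exp.tendsto 0).comp h1
      rw [Function.comp_def] at h2
      simp only [Real.exp_zero] at h2
      apply h2.congr
      intro n
      rw [← Real.rpow_def_of_pos hD0]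
    have hev1 : ∀ᶠ n : ℕ in atTop, D ^ (1/(n:ℝ)) < 2 :=
      hDlim.eventually_lt_const (by norm_num)
    have hfinal : ∀ᶠ n : ℕ in atTop, dist (EnH p f n ^ (1/(n:ℝ))) 0 < ε := by
      filter_upwards [hev1, Filter.eventually_ge_atTop 1] with n hn2 hn1
      have hn0 : (n:ℝ) ≠ 0 := Nat.cast_ne_zero.2 (by omega)
      have h1 : EnH p f n ^ (1/(n:ℝ)) ≤ (D * R⁻¹ ^ n) ^ (1/(n:ℝ)) :=
        Real.rpow_le_rpow (hEnn n) (hEb n) (by positivity)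
      have h2 : (D * R⁻¹ ^ n) ^ (1/(n:ℝ)) = D ^ (1/(n:ℝ)) * R⁻¹ := by
        rw [Real.mul_rpow hD0.le (by positivity)]
        congr 1
        rw [← Real.rpow_natCast R⁻¹ n, ← Real.rpow_mul hRinv0]
        rw [mul_one_div, div_self hn0, Real.rpow_one]
      rw [Real.dist_eq, sub_zero, _root_.abs_of_nonneg (Real.rpow_nonneg (hEnn n) _)]
      have hDn0 : (0:ℝ) ≤ D ^ (1/(n:ℝ)) := Real.rpow_nonneg hD0.le _
      calc EnH p f n ^ (1/(n:ℝ)) ≤ D ^ (1/(n:ℝ)) * R⁻¹ := by rw [← h2]; exact h1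
        _ < ε := by nlinarith
    exact Filter.eventually_atTop.1 hfinal
end
end
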